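/- Let 𝔪 > 0 and a ∈ ℝ with a² < 𝔪², and set r₊ := 𝔪 + √(𝔪² − a²) and κ₊ := r₊ − 𝔪. Define P : {(r, θ, σ, ξ, η_θ, η_φ) ∈ ℝ⁶ : sin θ ≠ 0} → ℝ by P(r, θ, σ, ξ, η_θ, η_φ) := −2(−(r²+a²)σ + a η_φ)ξ − (r² − 2𝔪r + a²)ξ² − η_θ² − sin⁻²θ (η_φ − a sin²θ σ)². Then for every θ with sin θ ≠ 0 and every ξ ∈ ℝ, at the point (r₊, θ, 0, ξ, 0, 0) the partial derivatives of P satisfy: ∂P/∂σ = 2(r₊² + a²)ξ, ∂P/∂η_φ = −2aξ, ∂P/∂η_θ = 0, ∂P/∂ξ = 0, ∂P/∂r = −2κ₊ ξ², and ∂P/∂θ = 0. Consequently, at the conormal bundle N*{r = r₊} of the event horizon, the Hamiltonian vector field of ϱ²G equals −2(r₊² + a²)ξ ∂_{t_*} − 2aξ ∂_{φ_*} + 2κ₊ ξ² ∂_ξ. -/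
import Mathlib


open Real

lemma deriv_quad (a b c x0 : ℝ) :
    deriv (fun x : ℝ => a * x + b * x ^ 2 + c) x0 = a + 2 * b * x0 := by
  have h1 : HasDerivAt (fun x : ℝ => a * x) a x0 := by
    simpa using (hasDerivAt_id x0).const_mul a
  have h2 : HasDerivAt (fun x : ℝ => b * x ^ 2) (2 * b * x0) x0 := by
    have := (hasDerivAt_pow 2 x0).const_mul b
    simpa [pow_one] using this.congr_deriv (by ring)
  exact ((h1.add h2).add_const c).deriv

/-- `ϱ²G`, i.e. `ϱ² = r² + a²cos²θ` times the dual metric function of the Kerr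
metric, evaluated on the covector `−σ dt_* + ξ dr + η_θ dθ + η_φ dφ_*` in the
coordinates `(t_*, r, θ, φ_*)`. -/
noncomputable def kerrP (𝔪 a r θ σ ξ ηθ ηφ : ℝ) : ℝ :=
  -(2 * (-((r ^ 2 + a ^ 2) * σ) + a * ηφ) * ξ)
    - (r ^ 2 - 2 * 𝔪 * r + a ^ 2) * ξ ^ 2 - ηθ ^ 2
    - (Real.sin θ ^ 2)⁻¹ * (ηφ - a * Real.sin θ ^ 2 * σ) ^ 2

/-- At the conormal bundle of the event horizon `{r = rplus}` (i.e. at points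
`(rplus, θ, 0, ξ, 0, 0)`), the partial derivatives of `P = ϱ²G` are
`∂P/∂σ = 2(rplus²+a²)ξ`, `∂P/∂η_φ = −2aξ`, `∂P/∂η_θ = 0`, `∂P/∂ξ = 0`,
`∂P/∂r = −2kplusξ²`, and `∂P/∂θ = 0`; consequently the Hamiltonian vector field of
`ϱ²G` there equals `−2(rplus²+a²)ξ ∂_{t_*} − 2aξ ∂_{φ_*} + 2kplusξ² ∂_ξ`. -/
theorem kerrP_derivs_at_horizon (𝔪 a : ℝ) (h𝔪 : 0 < 𝔪) (ha : a ^ 2 < 𝔪 ^ 2)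
    (θ ξ : ℝ) (hθ : Real.sin θ ≠ 0) :
    let rplus : ℝ := 𝔪 + Real.sqrt (𝔪 ^ 2 - a ^ 2)
    let kplus : ℝ := rplus - 𝔪
    deriv (fun σ => kerrP 𝔪 a rplus θ σ ξ 0 0) 0 = 2 * (rplus ^ 2 + a ^ 2) * ξ ∧
    deriv (fun ηφ => kerrP 𝔪 a rplus θ 0 ξ 0 ηφ) 0 = -(2 * a * ξ) ∧
    deriv (fun ηθ => kerrP 𝔪 a rplus θ 0 ξ ηθ 0) 0 = 0 ∧
    deriv (fun ξ' => kerrP 𝔪 a rplus θ 0 ξ' 0 0) ξ = 0 ∧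
    deriv (fun r => kerrP 𝔪 a r θ 0 ξ 0 0) rplus = -(2 * kplus * ξ ^ 2) ∧
    deriv (fun θ' => kerrP 𝔪 a rplus θ' 0 ξ 0 0) θ = 0 := by
  intro rplus kplus
  have hsq : Real.sqrt (𝔪 ^ 2 - a ^ 2) ^ 2 = 𝔪 ^ 2 - a ^ 2 :=
    Real.sq_sqrt (by nlinarith)
  have hΔ : rplus ^ 2 - 2 * 𝔪 * rplus + a ^ 2 = 0 := by
    simp only [rplus]; nlinarith [hsq]
  have hs2 : Real.sin θ ^ 2 ≠ 0 := pow_ne_zero 2 hθ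
  refine ⟨?_, ?_, ?_, ?_, ?_, ?_⟩
  · have hf : (fun σ => kerrP 𝔪 a rplus θ σ ξ 0 0)
        = fun σ : ℝ => (2 * (rplus ^ 2 + a ^ 2) * ξ) * σ
            + (-(a ^ 2 * Real.sin θ ^ 2)) * σ ^ 2
            + (-((rplus ^ 2 - 2 * 𝔪 * rplus + a ^ 2) * ξ ^ 2)) := by
      funext σ; unfold kerrP; field_simp; ring
    rw [hf, deriv_quad]; ring
  · have hf : (fun ηφ => kerrP 𝔪 a rplus θ 0 ξ 0 ηφ)
        = fun ηφ : ℝ => (-(2 * a * ξ)) * ηφ + (-(Real.sin θ ^ 2)⁻¹) * ηφ ^ 2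
            + (-((rplus ^ 2 - 2 * 𝔪 * rplus + a ^ 2) * ξ ^ 2)) := by
      funext ηφ; unfold kerrP; field_simp; ring
    rw [hf, deriv_quad]; ring
  · have hf : (fun ηθ => kerrP 𝔪 a rplus θ 0 ξ ηθ 0)
        = fun ηθ : ℝ => (0 : ℝ) * ηθ + (-1) * ηθ ^ 2
            + (-((rplus ^ 2 - 2 * 𝔪 * rplus + a ^ 2) * ξ ^ 2)) := by
      funext ηθ; unfold kerrP; field_simp; ring
    rw [hf, deriv_quad]; ring
  · have hf : (fun ξ' => kerrP 𝔪 a rplus θ 0 ξ' 0 0)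
        = fun ξ' : ℝ => (0 : ℝ) * ξ'
            + (-(rplus ^ 2 - 2 * 𝔪 * rplus + a ^ 2)) * ξ' ^ 2 + 0 := by
      funext ξ'; unfold kerrP; field_simp; ring
    rw [hf, deriv_quad, hΔ]; ring
  · have hf : (fun r => kerrP 𝔪 a r θ 0 ξ 0 0)
        = fun r : ℝ => (2 * 𝔪 * ξ ^ 2) * r + (-(ξ ^ 2)) * r ^ 2
            + (-(a ^ 2 * ξ ^ 2)) := by
      funext r; unfold kerrP; field_simp; ring
    rw [hf, deriv_quad]; simp only [kplus]; ring
  · have hf : (fun θ' => kerrP 𝔪 a rplus θ' 0 ξ 0 0)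
        = fun _ : ℝ => -((rplus ^ 2 - 2 * 𝔪 * rplus + a ^ 2) * ξ ^ 2) := by
      funext θ'; unfold kerrP; simp
    rw [hf, deriv_const]
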